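/- Let $S\in\mathbb{R}^{(k+2)\times(k+2)}$ satisfy $\sum_l S_{i,l}=0$ for each row $i$, $\sum_i S_{i,l}=\tau_l$ for each column $l$ with $\tau=(-1,0,\dots,0,1)$. Then for any scalars $\{\phi_i\},\{B_i\}$: $\sum_{i,l} S_{i,l}(\phi_i-\phi_l)\frac{B_i+B_l}{2} = \sum_{i,l}\phi_i B_l S_{i,l} - \sum_i \tau_i\,\phi_i B_i$. -/

import Mathlib

open Matrix

/-- Core algebraic identity in the proof of entropy conservation: for an SBP
stiffness matrix `S` (with `S + Sᵀ = diag τ`, zero row sums, and column sums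
`τ`), and arbitrary nodal scalars `φ`, `B`,
`∑ S_{il} (φᵢ - φ_l)(Bᵢ + B_l)/2 = ∑ φᵢ B_l S_{il} - ∑ τᵢ φᵢ Bᵢ`. -/
theorem sbp_source_identity (k : ℕ)
    (S : Matrix (Fin (k+2)) (Fin (k+2)) ℝ)
    (τ : Fin (k+2) → ℝ)
    (hτ : τ = fun j => if j = 0 then (-1:ℝ) else if j = Fin.last (k+1) then 1 else 0)
    (hSBP : ∀ i l, S i l + S l i = if i = l then τ i else 0)
    (hrow : ∀ i, ∑ l, S i l = 0)
    (hcol : ∀ l, ∑ i, S i l = τ l)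
    (φ B : Fin (k+2) → ℝ) :
    ∑ i, ∑ l, S i l * (φ i - φ l) * ((B i + B l) / 2)
      = (∑ i, ∑ l, φ i * B l * S i l) - ∑ i, τ i * φ i * B i := by

  have h1 : ∑ i, ∑ l, S i l * (φ i * B i) = 0 := by
    refine Finset.sum_eq_zero fun i _ => ?_
    rw [← Finset.sum_mul, hrow, zero_mul]
  have h2 : ∑ i, ∑ l, S i l * (φ l * B l) = ∑ i, τ i * φ i * B i := by
    rw [Finset.sum_comm]
    refine Finset.sum_congr rfl fun l _ => ?_
    rw [← Finset.sum_mul, hcol]; ring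
  have h4 : ∑ i, ∑ l, S i l * (φ i * B l) = ∑ i, ∑ l, φ i * B l * S i l := by
    refine Finset.sum_congr rfl fun i _ => Finset.sum_congr rfl fun l _ => by ring
  have h3 : ∑ i, ∑ l, S i l * (φ l * B i)
      = (∑ i, τ i * φ i * B i) - ∑ i, ∑ l, φ i * B l * S i l := by
    rw [Finset.sum_comm]
    have key : ∀ l i, S i l * (φ l * B i)
        = (if i = l then τ i else 0) * (φ l * B i) - S l i * (φ l * B i) := by
      intro l i
      have h := hSBP i l
      linear_combination (φ l * B i) * h
    calc ∑ l, ∑ i, S i l * (φ l * B i)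
        = ∑ l, ∑ i, ((if i = l then τ i else 0) * (φ l * B i) - S l i * (φ l * B i)) := by
          exact Finset.sum_congr rfl fun l _ => Finset.sum_congr rfl fun i _ => key l i
      _ = (∑ l, ∑ i, (if i = l then τ i else 0) * (φ l * B i))
            - ∑ l, ∑ i, S l i * (φ l * B i) := by
          rw [← Finset.sum_sub_distrib]
          exact Finset.sum_congr rfl fun l _ => Finset.sum_sub_distrib _ _
      _ = (∑ i, τ i * φ i * B i) - ∑ i, ∑ l, φ i * B l * S i l := by
          have ha : ∑ l, ∑ i, (if i = l then τ i else 0) * (φ l * B i)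
              = ∑ i, τ i * φ i * B i := by
            refine Finset.sum_congr rfl fun l _ => ?_
            rw [Finset.sum_eq_single l]
            · simp [mul_assoc]
            · intro i _ hi; simp [hi]
            · simp
          have hb : ∑ l, ∑ i, S l i * (φ l * B i)
              = ∑ i, ∑ l, φ i * B l * S i l := by
            refine Finset.sum_congr rfl fun l _ => Finset.sum_congr rfl fun i _ => by ring
          rw [ha, hb]
  have expand : ∑ i, ∑ l, S i l * (φ i - φ l) * ((B i + B l) / 2)
      = ((∑ i, ∑ l, S i l * (φ i * B i)) + (∑ i, ∑ l, S i l * (φ i * B l))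
        - (∑ i, ∑ l, S i l * (φ l * B i)) - (∑ i, ∑ l, S i l * (φ l * B l))) / 2 := by
    have step : ∀ i l : Fin (k+2), S i l * (φ i - φ l) * ((B i + B l) / 2)
        = (S i l * (φ i * B i) + S i l * (φ i * B l) - S i l * (φ l * B i)
          - S i l * (φ l * B l)) / 2 := fun i l => by ring
    simp only [step, ← Finset.sum_div, Finset.sum_add_distrib, Finset.sum_sub_distrib]
  rw [expand, h1, h2, h3, h4]
  ring
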